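/- Let G be a 2-connected chordal graph and X a clique-cut of G. Any two longest cycles of G that each cross X (i.e., each has vertices in at least two components of G−X) must share a common vertex of X. -/

import Mathlib

open SimpleGraph

def IsChordal {V : Type*} (G : SimpleGraph V) : Prop :=
  ∀ ⦃u : V⦄ (c : G.Walk u u), c.IsCycle → 4 ≤ c.length →
    ∃ x y : V, x ∈ c.support ∧ y ∈ c.support ∧ G.Adj x y ∧ s(x, y) ∉ c.edges

def IsLongestCycle {V : Type*} (G : SimpleGraph V) {u : V} (C : G.Walk u u) : Prop :=
  C.IsCycle ∧ ∀ ⦃x : V⦄ (D : G.Walk x x), D.IsCycle → D.length ≤ C.length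

def TwoConnected {V : Type*} [Fintype V] (G : SimpleGraph V) : Prop :=
  3 ≤ Fintype.card V ∧ ∀ v : V, ((⊤ : G.Subgraph).deleteVerts {v}).coe.Connected

def avoid {V : Type*} (G : SimpleGraph V) (X : Set V) : SimpleGraph V where
  Adj a b := G.Adj a b ∧ a ∉ X ∧ b ∉ X
  symm := ⟨fun _ _ ⟨h, ha, hb⟩ => ⟨h.symm, hb, ha⟩⟩
  loopless := ⟨fun a ⟨h, _, _⟩ => G.loopless.irrefl a h⟩

/-- A cycle crosses `X` if it has vertices in at least two components of `G − X`. -/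
def CycleCrosses {V : Type*} (G : SimpleGraph V) (X : Set V) {u : V} (C : G.Walk u u) : Prop :=
  ∃ a ∈ C.support, ∃ b ∈ C.support, a ∉ X ∧ b ∉ X ∧ ¬(avoid G X).Reachable a b


namespace LCCAux

open SimpleGraph.Walk

variable {V : Type*} {G : SimpleGraph V} {X B : Set V} {pB : Sym2 V → Bool}

lemma touch_count (hpB : ∀ a b : V, pB s(a,b) = true ↔ a ∈ B ∨ b ∈ B)
    {s t : V} (w : G.Walk s t) :
    ∀ v ∈ w.support, v ∈ B → t ∉ B → 1 ≤ w.edges.countP pB := by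
  induction w with
  | nil =>
    intro v hv hvB htB
    simp only [support_nil, List.mem_singleton] at hv
    exact absurd (hv ▸ hvB) htB
  | @cons a c d hadj w' ih =>
    intro v hv hvB htB
    rw [support_cons] at hv
    rw [edges_cons, List.countP_cons]
    rcases List.mem_cons.mp hv with rfl | hv'
    · have h1 : pB s(v, c) = true := (hpB _ _).mpr (Or.inl hvB)
      simp only [h1, if_true]
      omega
    · have := ih v hv' hvB htB
      omega

lemma allB_count (hpB : ∀ a b : V, pB s(a,b) = true ↔ a ∈ B ∨ b ∈ B)
    {s t : V} (w : G.Walk s t) :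
    (∀ z ∈ w.support, z ∈ B) → w.length ≤ w.edges.countP pB := by
  induction w with
  | nil => intro _; simp
  | @cons a c d hadj w' ih =>
    intro hall
    have h1 : pB s(a, c) = true :=
      (hpB _ _).mpr (Or.inl (hall a (by simp [support_cons])))
    have h2 := ih (fun z hz => hall z (by rw [support_cons]; exact List.mem_cons_of_mem _ hz))
    rw [edges_cons, List.countP_cons, length_cons]
    simp only [h1, if_true]
    omega

lemma skipA (hXc : G.IsClique X) (hBX : ∀ z ∈ B, z ∉ X)
    (hB : ∀ ⦃a b : V⦄, G.Adj a b → a ∉ X → b ∉ X → (a ∈ B ↔ b ∈ B))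
    (hpB : ∀ a b : V, pB s(a,b) = true ↔ a ∈ B ∨ b ∈ B)
    {s t : V} (w : G.Walk s t) :
    w.IsPath → t ∉ B →
    ∃ (x : V) (P : G.Walk x t), (x ∈ X ∨ x = s) ∧ (s ∉ B → x = s) ∧ x ∈ w.support ∧
      P.IsPath ∧ (∀ z ∈ P.support, z ∈ w.support ∧ z ∉ B) ∧
      w.length ≤ P.length + w.edges.countP pB := by
  induction w with
  | nil =>
    intro _ htB
    refine ⟨_, Walk.nil, Or.inr rfl, fun _ => rfl, Walk.start_mem_support _,
      Walk.IsPath.nil, ?_, by simp⟩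
    intro z hz
    simp only [support_nil, List.mem_singleton] at hz
    subst hz
    exact ⟨Walk.start_mem_support _, htB⟩
  | @cons a c d hadj w' ih =>
    intro hw htB
    have hw' : w'.IsPath := hw.of_cons
    have haw' : a ∉ w'.support := ((Walk.cons_isPath_iff hadj w').mp hw).2
    obtain ⟨x, P', hxX, hxs, hxsupp, hP', hPsub, hlen⟩ := ih hw' htB
    have hxB : x ∉ B := (hPsub x P'.start_mem_support).2
    by_cases hcB : c ∈ B
    · have hxX' : x ∈ X := by
        rcases hxX with h | rfl
        · exact h
        · exact absurd hcB hxB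
      have hpBe : pB s(a, c) = true := (hpB _ _).mpr (Or.inr hcB)
      by_cases haB : a ∈ B
      · refine ⟨x, P', Or.inl hxX', fun h => absurd haB h, ?_, hP',
          fun z hz => ⟨?_, (hPsub z hz).2⟩, ?_⟩
        · rw [support_cons]; exact List.mem_cons_of_mem _ hxsupp
        · rw [support_cons]; exact List.mem_cons_of_mem _ (hPsub z hz).1
        · rw [length_cons, edges_cons, List.countP_cons]
          simp only [hpBe, if_true]
          omega
      · have hcX : c ∉ X := hBX c hcB
        have haX : a ∈ X := by
          by_contra haX
          exact haB ((hB hadj haX hcX).mpr hcB)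
        have hax : a ≠ x := fun h => haw' (h ▸ hxsupp)
        have hadj2 : G.Adj a x := hXc haX hxX' hax
        refine ⟨a, Walk.cons hadj2 P', Or.inr rfl, fun _ => rfl, Walk.start_mem_support _,
          ?_, ?_, ?_⟩
        · rw [Walk.cons_isPath_iff]
          exact ⟨hP', fun h => haw' ((hPsub a h).1)⟩
        · intro z hz
          rw [support_cons, List.mem_cons] at hz
          rcases hz with rfl | hz
          · exact ⟨Walk.start_mem_support _, haB⟩
          · exact ⟨by rw [support_cons]; exact List.mem_cons_of_mem _ (hPsub z hz).1,
              (hPsub z hz).2⟩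
        · rw [length_cons, length_cons, edges_cons, List.countP_cons]
          simp only [hpBe, if_true]
          omega
    · have hxc : x = c := hxs hcB
      subst hxc
      by_cases haB : a ∈ B
      · have hxX' : x ∈ X := by
          by_contra hxXn
          exact hcB ((hB hadj (hBX a haB) hxXn).mp haB)
        have hpBe : pB s(a, x) = true := (hpB _ _).mpr (Or.inl haB)
        refine ⟨x, P', Or.inl hxX', fun h => absurd haB h, ?_, hP',
          fun z hz => ⟨?_, (hPsub z hz).2⟩, ?_⟩
        · rw [support_cons]; exact List.mem_cons_of_mem _ hxsupp
        · rw [support_cons]; exact List.mem_cons_of_mem _ (hPsub z hz).1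
        · rw [length_cons, edges_cons, List.countP_cons]
          simp only [hpBe, if_true]
          omega
      · have hpBe : ¬ (pB s(a, x) = true) := by
          intro h
          rcases (hpB _ _).mp h with h' | h'
          · exact haB h'
          · exact hcB h'
        refine ⟨a, Walk.cons hadj P', Or.inr rfl, fun _ => rfl, Walk.start_mem_support _,
          ?_, ?_, ?_⟩
        · rw [Walk.cons_isPath_iff]
          exact ⟨hP', fun h => haw' ((hPsub a h).1)⟩
        · intro z hz
          rw [support_cons, List.mem_cons] at hz
          rcases hz with rfl | hz
          · exact ⟨Walk.start_mem_support _, haB⟩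
          · exact ⟨by rw [support_cons]; exact List.mem_cons_of_mem _ (hPsub z hz).1,
              (hPsub z hz).2⟩
        · rw [length_cons, length_cons, edges_cons, List.countP_cons, if_neg hpBe]
          omega


lemma trimB (hBX : ∀ z ∈ B, z ∉ X)
    (hB : ∀ ⦃a b : V⦄, G.Adj a b → a ∉ X → b ∉ X → (a ∈ B ↔ b ∈ B))
    (hpB : ∀ a b : V, pB s(a,b) = true ↔ a ∈ B ∨ b ∈ B)
    {s t : V} (w : G.Walk s t) :
    w.IsPath → t ∈ B →
    (∀ z ∈ w.support, z ∈ B) ∨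
    ∃ (x : V) (w₁ : G.Walk s x), x ∈ X ∧ w₁.IsPath ∧ (∀ z ∈ w₁.support, z ∈ w.support) ∧
      w.length + w₁.edges.countP pB ≤ w₁.length + w.edges.countP pB := by
  induction w with
  | nil =>
    intro _ htB
    left
    intro z hz
    simp only [support_nil, List.mem_singleton] at hz
    exact hz ▸ htB
  | @cons a c d hadj w' ih =>
    intro hw htB
    have hw' : w'.IsPath := hw.of_cons
    have haw' : a ∉ w'.support := ((Walk.cons_isPath_iff hadj w').mp hw).2
    rcases ih hw' htB with hall | ⟨x, w₁', hxX, hw₁', hsub, hacc⟩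
    · have hcB : c ∈ B := hall c (Walk.start_mem_support _)
      by_cases haB : a ∈ B
      · left
        intro z hz
        rw [support_cons, List.mem_cons] at hz
        rcases hz with rfl | hz
        · exact haB
        · exact hall z hz
      · right
        have haX : a ∈ X := by
          by_contra haX
          exact haB ((hB hadj haX (hBX c hcB)).mpr hcB)
        refine ⟨a, Walk.nil, haX, Walk.IsPath.nil, ?_, ?_⟩
        · intro z hz
          simp only [support_nil, List.mem_singleton] at hz
          subst hz
          exact Walk.start_mem_support _
        · have h1 : w'.length ≤ w'.edges.countP pB := allB_count hpB w' hall
          have hpBe : pB s(a, c) = true := (hpB _ _).mpr (Or.inr hcB)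
          rw [length_cons, edges_cons, List.countP_cons]
          simp only [edges_nil, List.countP_nil, length_nil, hpBe, if_true]
          omega
    · right
      refine ⟨x, Walk.cons hadj w₁', hxX, ?_, ?_, ?_⟩
      · rw [Walk.cons_isPath_iff]
        exact ⟨hw₁', fun h => haw' (hsub a h)⟩
      · intro z hz
        rw [support_cons, List.mem_cons] at hz
        rw [support_cons]
        rcases hz with rfl | hz
        · exact List.mem_cons_self
        · exact List.mem_cons_of_mem _ (hsub z hz)
      · rw [length_cons, length_cons, edges_cons, edges_cons, List.countP_cons,
          List.countP_cons]
        have hite : (if pB s(a, c) = true then 1 else 0) ≤ 1 := by split <;> omega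
        omega

lemma runB (hBX : ∀ z ∈ B, z ∉ X)
    (hB : ∀ ⦃a b : V⦄, G.Adj a b → a ∉ X → b ∉ X → (a ∈ B ↔ b ∈ B))
    (hpB : ∀ a b : V, pB s(a,b) = true ↔ a ∈ B ∨ b ∈ B)
    {s t : V} (w : G.Walk s t) :
    w.IsPath → s ∈ B → t ∉ B →
    ∃ (y : V) (piece : G.Walk s y) (w₂ : G.Walk y t), y ∈ X ∧ piece.IsPath ∧ w₂.IsPath ∧
      (∀ z ∈ piece.support, z ∈ w.support ∧ (z ∈ B ∨ z = y)) ∧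
      (∀ z ∈ w₂.support, z ∈ w.support) ∧
      (∀ z, z ∈ piece.support → z ∈ w₂.support → z = y) ∧
      w.edges.countP pB ≤ piece.length + w₂.edges.countP pB ∧
      w₂.length < w.length := by
  induction w with
  | nil => intro _ hsB htB; exact absurd hsB htB
  | @cons a c d hadj w' ih =>
    intro hw hsB htB
    have hw' : w'.IsPath := hw.of_cons
    have haw' : a ∉ w'.support := ((Walk.cons_isPath_iff hadj w').mp hw).2
    by_cases hcB : c ∈ B
    · obtain ⟨y, piece', w₂, hyX, hpiece', hw₂p, hpsub, hw₂sub, hdisj, hacc, hlt⟩ :=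
        ih hw' hcB htB
      refine ⟨y, Walk.cons hadj piece', w₂, hyX, ?_, hw₂p, ?_, ?_, ?_, ?_, ?_⟩
      · rw [Walk.cons_isPath_iff]
        exact ⟨hpiece', fun h => haw' (hpsub a h).1⟩
      · intro z hz
        rw [support_cons, List.mem_cons] at hz
        rcases hz with rfl | hz
        · exact ⟨Walk.start_mem_support _, Or.inl hsB⟩
        · exact ⟨by rw [support_cons]; exact List.mem_cons_of_mem _ (hpsub z hz).1,
            (hpsub z hz).2⟩
      · intro z hz
        rw [support_cons]
        exact List.mem_cons_of_mem _ (hw₂sub z hz)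
      · intro z hz hz2
        rw [support_cons, List.mem_cons] at hz
        rcases hz with rfl | hz
        · exact absurd (hw₂sub z hz2) haw'
        · exact hdisj z hz hz2
      · rw [length_cons, edges_cons, List.countP_cons]
        have hite : (if pB s(a, c) = true then 1 else 0) ≤ 1 := by split <;> omega
        omega
      · rw [length_cons]
        omega
    · have hcX : c ∈ X := by
        by_contra hcX
        exact hcB ((hB hadj (hBX a hsB) hcX).mp hsB)
      refine ⟨c, Walk.cons hadj Walk.nil, w', hcX, ?_, hw', ?_, ?_, ?_, ?_, ?_⟩
      · rw [Walk.cons_isPath_iff]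
        refine ⟨Walk.IsPath.nil, ?_⟩
        simp only [support_nil, List.mem_singleton]
        exact hadj.ne
      · intro z hz
        simp only [support_cons, support_nil, List.mem_cons, List.not_mem_nil, or_false] at hz
        rcases hz with rfl | rfl
        · exact ⟨Walk.start_mem_support _, Or.inl hsB⟩
        · exact ⟨by rw [support_cons]; exact List.mem_cons_of_mem _ (Walk.start_mem_support _),
            Or.inr rfl⟩
      · intro z hz
        rw [support_cons]
        exact List.mem_cons_of_mem _ hz
      · intro z hz hz2
        simp only [support_cons, support_nil, List.mem_cons, List.not_mem_nil, or_false] at hz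
        rcases hz with rfl | rfl
        · exact absurd hz2 haw'
        · rfl
      · rw [edges_cons, List.countP_cons, length_cons, length_nil]
        have hite : (if pB s(a, c) = true then 1 else 0) ≤ 1 := by split <;> omega
        omega
      · rw [length_cons]
        omega


lemma chainB (hXc : G.IsClique X) (hBX : ∀ z ∈ B, z ∉ X)
    (hB : ∀ ⦃a b : V⦄, G.Adj a b → a ∉ X → b ∉ X → (a ∈ B ↔ b ∈ B))
    (hpB : ∀ a b : V, pB s(a,b) = true ↔ a ∈ B ∨ b ∈ B) :
    ∀ (n : ℕ) {s t : V} (w : G.Walk s t), w.length ≤ n → w.IsPath → s ∉ B → t ∉ B →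
    w.edges.countP pB = 0 ∨
    ∃ (ys ye : V) (Q : G.Walk ys ye), ys ∈ X ∧ ye ∈ X ∧ ys ≠ ye ∧ Q.IsPath ∧
      (∀ z ∈ Q.support, z ∈ w.support ∧ (z ∈ X ∨ z ∈ B)) ∧
      (s ∈ Q.support → ys = s) ∧
      w.edges.countP pB ≤ Q.length := by
  intro n
  induction n with
  | zero =>
    intro s t w hn _ _ _
    left
    have h0 : w.edges.length = 0 := by rw [Walk.length_edges]; omega
    rw [List.length_eq_zero_iff] at h0
    rw [h0, List.countP_nil]
  | succ n ihn =>
    intro s t w hn hw hsB htB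
    cases w with
    | nil =>
      left
      rw [Walk.edges_nil, List.countP_nil]
    | @cons _ c _ hadj w' =>
      rw [Walk.length_cons] at hn
      have hw' : w'.IsPath := hw.of_cons
      have haw' : s ∉ w'.support := ((Walk.cons_isPath_iff hadj w').mp hw).2
      by_cases hcB : c ∈ B
      · have hsX : s ∈ X := by
          by_contra hsX
          exact hsB ((hB hadj hsX (hBX c hcB)).mpr hcB)
        obtain ⟨y, piece, w₂, hyX, hpiece, hw₂p, hpsub, hw₂sub, hdisjpw, hacc, hlt⟩ :=
          runB hBX hB hpB w' hw' hcB htB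
        have hyB : y ∉ B := fun h => hBX y h hyX
        have hys : s ≠ y := by
          intro h
          apply haw'
          rw [h]
          exact hw₂sub y (Walk.start_mem_support _)
        have hconsP : (Walk.cons hadj piece).IsPath := by
          rw [Walk.cons_isPath_iff]
          exact ⟨hpiece, fun h => haw' (hpsub s h).1⟩
        have hpieceX : ∀ z ∈ piece.support,
            z ∈ (Walk.cons hadj w').support ∧ (z ∈ X ∨ z ∈ B) := by
          intro z hz
          refine ⟨by rw [Walk.support_cons]; exact List.mem_cons_of_mem _ (hpsub z hz).1, ?_⟩
          rcases (hpsub z hz).2 with hzB | rfl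
          · exact Or.inr hzB
          · exact Or.inl hyX
        rcases ihn w₂ (by omega) hw₂p hyB htB with h0 |
          ⟨ys', ye', Q₂, hys'X, hye'X, hne', hQ₂, hQ₂sub, hQ₂s, hQ₂len⟩
        · right
          refine ⟨s, y, Walk.cons hadj piece, hsX, hyX, hys, hconsP, ?_, fun _ => rfl, ?_⟩
          · intro z hz
            rw [Walk.support_cons, List.mem_cons] at hz
            rcases hz with rfl | hz
            · exact ⟨Walk.start_mem_support _, Or.inl hsX⟩
            · exact hpieceX z hz
          · rw [Walk.edges_cons, List.countP_cons, Walk.length_cons]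
            have hite : (if pB s(s, c) = true then 1 else 0) ≤ 1 := by split <;> omega
            omega
        · right
          have hQ₂nod : Q₂.support.Nodup := (Walk.isPath_def Q₂).mp hQ₂
          have hseQ : s ∉ Q₂.support := by
            intro h
            exact haw' (hw₂sub s ((hQ₂sub s h).1))
          have hsye : s ≠ ye' := by
            intro h
            apply haw'
            rw [h]
            exact hw₂sub ye' ((hQ₂sub ye' (Walk.end_mem_support Q₂)).1)
          by_cases hyy : ys' = y
          · subst hyy
            refine ⟨s, ye', (Walk.cons hadj piece).append Q₂, hsX, hye'X, hsye, ?_, ?_,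
              fun _ => rfl, ?_⟩
            · rw [Walk.isPath_def, Walk.support_append]
              apply List.Nodup.append ((Walk.isPath_def _).mp hconsP) hQ₂nod.tail
              intro z hz1 hz2
              have hz2' : z ∈ Q₂.support := List.mem_of_mem_tail hz2
              have hz2w : z ∈ w₂.support := (hQ₂sub z hz2').1
              rw [Walk.support_cons, List.mem_cons] at hz1
              rcases hz1 with rfl | hz1
              · exact haw' (hw₂sub z hz2w)
              · have hzy := hdisjpw z hz1 hz2w
                subst hzy
                rw [Walk.support_eq_cons] at hQ₂nod
                exact (List.nodup_cons.mp hQ₂nod).1 hz2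
            · intro z hz
              rw [Walk.mem_support_append_iff] at hz
              rcases hz with hz | hz
              · rw [Walk.support_cons, List.mem_cons] at hz
                rcases hz with rfl | hz
                · exact ⟨Walk.start_mem_support _, Or.inl hsX⟩
                · exact hpieceX z hz
              · refine ⟨?_, (hQ₂sub z hz).2⟩
                rw [Walk.support_cons]
                exact List.mem_cons_of_mem _ (hw₂sub z ((hQ₂sub z hz).1))
            · rw [Walk.length_append, Walk.length_cons, Walk.edges_cons, List.countP_cons]
              have hite : (if pB s(s, c) = true then 1 else 0) ≤ 1 := by split <;> omega
              omega
          · have hadj2 : G.Adj ys' y := hXc hys'X hyX hyy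
            refine ⟨s, ye', (Walk.cons hadj piece).append (Walk.cons hadj2.symm Q₂), hsX,
              hye'X, hsye, ?_, ?_, fun _ => rfl, ?_⟩
            · rw [Walk.isPath_def, Walk.support_append,
                Walk.support_cons hadj2.symm Q₂, List.tail_cons]
              apply List.Nodup.append ((Walk.isPath_def _).mp hconsP) hQ₂nod
              intro z hz1 hz2
              have hz2w : z ∈ w₂.support := (hQ₂sub z hz2).1
              rw [Walk.support_cons, List.mem_cons] at hz1
              rcases hz1 with rfl | hz1
              · exact haw' (hw₂sub z hz2w)
              · have hzy := hdisjpw z hz1 hz2w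
                subst hzy
                exact hyy (hQ₂s hz2)
            · intro z hz
              rw [Walk.mem_support_append_iff] at hz
              rcases hz with hz | hz
              · rw [Walk.support_cons, List.mem_cons] at hz
                rcases hz with rfl | hz
                · exact ⟨Walk.start_mem_support _, Or.inl hsX⟩
                · exact hpieceX z hz
              · rw [Walk.support_cons, List.mem_cons] at hz
                rcases hz with rfl | hz
                · refine ⟨?_, Or.inl hyX⟩
                  rw [Walk.support_cons]
                  exact List.mem_cons_of_mem _ (hw₂sub _ (Walk.start_mem_support _))
                · refine ⟨?_, (hQ₂sub z hz).2⟩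
                  rw [Walk.support_cons]
                  exact List.mem_cons_of_mem _ (hw₂sub z ((hQ₂sub z hz).1))
            · rw [Walk.length_append, Walk.length_cons, Walk.length_cons, Walk.edges_cons,
                List.countP_cons]
              have hite : (if pB s(s, c) = true then 1 else 0) ≤ 1 := by split <;> omega
              omega
      · have hpBe : ¬ (pB s(s, c) = true) := by
          intro h
          rcases (hpB _ _).mp h with h' | h'
          · exact hsB h'
          · exact hcB h'
        rcases ihn w' (by omega) hw' hcB htB with h0 |
          ⟨ys, ye, Q, q1, q2, q3, q4, q5, q6, q7⟩
        · left
          rw [Walk.edges_cons, List.countP_cons, if_neg hpBe]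
          omega
        · right
          refine ⟨ys, ye, Q, q1, q2, q3, q4, ?_, ?_, ?_⟩
          · intro z hz
            exact ⟨by rw [Walk.support_cons]; exact List.mem_cons_of_mem _ (q5 z hz).1,
              (q5 z hz).2⟩
          · intro hsQ
            exact absurd ((q5 s hsQ).1) haw'
          · rw [Walk.edges_cons, List.countP_cons, if_neg hpBe]
            omega


lemma mem_support_rotate [DecidableEq V] {u v : V} (c : G.Walk v v) (h : u ∈ c.support) {z : V} :
    z ∈ (c.rotate u h).support ↔ z ∈ c.support := by
  have hrot : c.rotate u h = (c.dropUntil u h).append (c.takeUntil u h) := rfl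
  rw [hrot, Walk.mem_support_append_iff]
  conv_rhs => rw [← Walk.take_spec c h]
  rw [Walk.mem_support_append_iff]
  exact or_comm

lemma countP_rotate [DecidableEq V] {u v : V} (c : G.Walk v v) (h : u ∈ c.support) :
    (c.rotate u h).edges.countP pB = c.edges.countP pB :=
  (Walk.rotate_edges c u h).perm.countP_eq pB

lemma length_rotate [DecidableEq V] {u v : V} (c : G.Walk v v) (h : u ∈ c.support) :
    (c.rotate u h).length = c.length := by
  have h2 := (Walk.rotate_edges c u h).perm.length_eq
  rwa [Walk.length_edges, Walk.length_edges] at h2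

lemma edges_disjoint_of_support_disjoint {a b c d : V} (P : G.Walk a b) (Q : G.Walk c d)
    (h : ∀ z, z ∈ P.support → z ∈ Q.support → False) :
    ∀ e ∈ P.edges, e ∉ Q.edges := by
  intro e
  induction e using Sym2.inductionOn with
  | _ z1 z2 =>
    intro he1 he2
    exact h z1 (P.fst_mem_support_of_mem_edges he1) (Q.fst_mem_support_of_mem_edges he2)



lemma key [DecidableEq V] (hXc : G.IsClique X) (hBX : ∀ z ∈ B, z ∉ X)
    (hB : ∀ ⦃a b : V⦄, G.Adj a b → a ∉ X → b ∉ X → (a ∈ B ↔ b ∈ B))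
    (hpB : ∀ a b : V, pB s(a,b) = true ↔ a ∈ B ∨ b ∈ B)
    {u v : V} (C : G.Walk u u) (D : G.Walk v v)
    (hC : C.IsCycle) (hD : D.IsCycle)
    (hmax : ∀ ⦃x : V⦄ (Z : G.Walk x x), Z.IsCycle → Z.length ≤ C.length)
    (hdisj : ∀ w ∈ X, w ∈ C.support → w ∈ D.support → False)
    {a₀ a₁ b₀ b₁ : V}
    (ha₀C : a₀ ∈ C.support) (ha₀B : a₀ ∈ B)
    (ha₁C : a₁ ∈ C.support) (ha₁B : a₁ ∉ B)
    (hb₀D : b₀ ∈ D.support) (hb₀B : b₀ ∈ B)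
    (hb₁D : b₁ ∈ D.support) (hb₁B : b₁ ∉ B) (hb₁X : b₁ ∉ X) :
    D.edges.countP pB + 2 ≤ C.edges.countP pB := by
  -- HOST side
  have hC2cyc : (C.rotate a₀ ha₀C).IsCycle := hC.rotate ha₀C
  have hC2cnt : (C.rotate a₀ ha₀C).edges.countP pB = C.edges.countP pB := countP_rotate _ _
  have hC2len : (C.rotate a₀ ha₀C).length = C.length := length_rotate _ _
  have hC2sup : ∀ z : V, z ∈ (C.rotate a₀ ha₀C).support ↔ z ∈ C.support :=
    fun z => mem_support_rotate _ _
  cases hE : C.rotate a₀ ha₀C with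
  | nil =>
    rw [hE] at hC2cyc
    exact absurd rfl ((Walk.isCycle_def _).mp hC2cyc).2.1
  | @cons _ w₀ _ hadj0 q =>
    rw [hE] at hC2cyc hC2cnt hC2len
    simp only [hE] at hC2sup
    have hqP : q.IsPath := ((Walk.cons_isCycle_iff q hadj0).mp hC2cyc).1
    have ha₀X : a₀ ∉ X := hBX a₀ ha₀B
    have ha₁q : a₁ ∈ q.support := by
      have h1 := (hC2sup a₁).mpr ha₁C
      rw [Walk.support_cons, List.mem_cons] at h1
      rcases h1 with h1 | h1
      · subst h1; exact absurd ha₀B ha₁B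
      · exact h1
    rcases trimB hBX hB hpB q hqP ha₀B with hall | ⟨x1, w₁, hx1X, hw₁P, hw₁sub, acc1⟩
    · exact absurd (hall a₁ ha₁q) ha₁B
    obtain ⟨x2, P, hx2or, _, hx2supp, hPp, hPsub, acc2⟩ :=
      skipA hXc hBX hB hpB w₁ hw₁P (fun h => hBX x1 h hx1X)
    have hx2X : x2 ∈ X := by
      rcases hx2or with h | h
      · exact h
      · subst h
        by_contra hw₀X
        exact (hPsub _ P.start_mem_support).2 ((hB hadj0 ha₀X hw₀X).mp ha₀B)
    have hPC : ∀ z ∈ P.support, z ∈ C.support ∧ z ∉ B := by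
      intro z hz
      refine ⟨?_, (hPsub z hz).2⟩
      have hzq : z ∈ q.support := hw₁sub z (hPsub z hz).1
      exact (hC2sup z).mp (by rw [Walk.support_cons]; exact List.mem_cons_of_mem _ hzq)
    have hx1C : x1 ∈ C.support := (hPC x1 P.end_mem_support).1
    have hx2C : x2 ∈ C.support := (hPC x2 P.start_mem_support).1
    have hhost : C.length ≤ P.length + C.edges.countP pB := by
      have h1 : pB s(a₀, w₀) = true := (hpB _ _).mpr (Or.inl ha₀B)
      rw [← hC2cnt, ← hC2len, Walk.length_cons, Walk.edges_cons, List.countP_cons]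
      simp only [h1, if_true]
      omega
    -- DONOR side
    have hD2cyc : (D.rotate b₁ hb₁D).IsCycle := hD.rotate hb₁D
    have hD2cnt : (D.rotate b₁ hb₁D).edges.countP pB = D.edges.countP pB := countP_rotate _ _
    have hD2sup : ∀ z : V, z ∈ (D.rotate b₁ hb₁D).support ↔ z ∈ D.support :=
      fun z => mem_support_rotate _ _
    cases hF : D.rotate b₁ hb₁D with
    | nil =>
      rw [hF] at hD2cyc
      exact absurd rfl ((Walk.isCycle_def _).mp hD2cyc).2.1
    | @cons _ d₀ _ hadjb qd =>
      rw [hF] at hD2cyc hD2cnt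
      simp only [hF] at hD2sup
      have hqdP : qd.IsPath := ((Walk.cons_isCycle_iff qd hadjb).mp hD2cyc).1
      have hd₀B : d₀ ∉ B := by
        intro h
        exact hb₁B ((hB hadjb hb₁X (hBX d₀ h)).mpr h)
      have hb₀qd : b₀ ∈ qd.support := by
        have h1 := (hD2sup b₀).mpr hb₀D
        rw [Walk.support_cons, List.mem_cons] at h1
        rcases h1 with h1 | h1
        · subst h1; exact absurd hb₀B hb₁B
        · exact h1
      have hcnt1 : 1 ≤ qd.edges.countP pB := touch_count hpB qd b₀ hb₀qd hb₀B hb₁B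
      rcases chainB hXc hBX hB hpB qd.length qd le_rfl hqdP hd₀B hb₁B with h0 |
        ⟨ys, ye, Q, hysX, hyeX, hysye, hQp, hQsub', hQs, hQlen⟩
      · omega
      have hDcnt : D.edges.countP pB ≤ Q.length := by
        have h0 : ¬ (pB s(b₁, d₀) = true) := by
          intro h
          rcases (hpB _ _).mp h with h' | h'
          · exact hb₁B h'
          · exact hd₀B h'
        rw [← hD2cnt, Walk.edges_cons, List.countP_cons, if_neg h0]
        omega
      have hQD : ∀ z ∈ Q.support, z ∈ D.support ∧ (z ∈ X ∨ z ∈ B) := by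
        intro z hz
        refine ⟨?_, (hQsub' z hz).2⟩
        have h1 : z ∈ qd.support := (hQsub' z hz).1
        exact (hD2sup z).mp (by rw [Walk.support_cons]; exact List.mem_cons_of_mem _ h1)
      have hysD : ys ∈ D.support := (hQD ys Q.start_mem_support).1
      have hyeD : ye ∈ D.support := (hQD ye Q.end_mem_support).1
      -- junctions
      have hx1ys : x1 ≠ ys := by
        intro h
        exact hdisj x1 hx1X hx1C (by rw [h]; exact hysD)
      have adj1 : G.Adj x1 ys := hXc hx1X hysX hx1ys
      have hyex2 : ye ≠ x2 := by
        intro h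
        exact hdisj ye hyeX (by rw [h]; exact hx2C) hyeD
      have adj2 : G.Adj ye x2 := hXc hyeX hx2X hyex2
      -- disjointness facts
      have hPQdisj : ∀ z, z ∈ P.support → z ∈ Q.support → False := by
        intro z hzP hzQ
        rcases (hQD z hzQ).2 with hzX | hzB
        · exact hdisj z hzX (hPC z hzP).1 (hQD z hzQ).1
        · exact (hPC z hzP).2 hzB
      have hx2Q : x2 ∉ Q.support := fun h => hdisj x2 hx2X hx2C (hQD x2 h).1
      have hx1Q : x1 ∉ Q.support := fun h => hdisj x1 hx1X hx1C (hQD x1 h).1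
      have hysP : ys ∉ P.support := fun h => hdisj ys hysX (hPC ys h).1 hysD
      have hyeP : ye ∉ P.support := fun h => hdisj ye hyeX (hPC ye h).1 hyeD
      -- the new cycle
      set Z : G.Walk x2 x2 :=
        P.append (Walk.cons adj1 (Q.append (Walk.cons adj2 Walk.nil))) with hZdef
      have hZsup : Z.support = P.support ++ (Q.support ++ [x2]) := by
        rw [hZdef, Walk.support_append, Walk.support_cons adj1, List.tail_cons,
          Walk.support_append, Walk.support_cons adj2, List.tail_cons, Walk.support_nil]
      have hZedg : Z.edges = P.edges ++ (s(x1, ys) :: (Q.edges ++ [s(ye, x2)])) := by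
        rw [hZdef, Walk.edges_append, Walk.edges_cons, Walk.edges_append, Walk.edges_cons,
          Walk.edges_nil]
      have hZlen : Z.length = P.length + Q.length + 2 := by
        rw [hZdef, Walk.length_append, Walk.length_cons, Walk.length_append, Walk.length_cons,
          Walk.length_nil]
        omega
      have hZtrail : Z.edges.Nodup := by
        rw [hZedg]
        apply List.Nodup.append hPp.isTrail.edges_nodup
        · rw [List.nodup_cons]
          constructor
          · intro h
            rw [List.mem_append] at h
            rcases h with h | h
            · exact hx1Q (Q.fst_mem_support_of_mem_edges h)
            · rw [List.mem_singleton, Sym2.eq_iff] at h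
              rcases h with ⟨h1, h2⟩ | ⟨h1, h2⟩
              · exact hdisj x1 hx1X hx1C (by rw [h1]; exact hyeD)
              · exact hysye h2
          · apply List.Nodup.append hQp.isTrail.edges_nodup (List.nodup_singleton _)
            intro e he hee
            rw [List.mem_singleton] at hee
            subst hee
            exact hx2Q (Q.snd_mem_support_of_mem_edges he)
        · intro e heP he2
          rw [List.mem_cons] at he2
          rcases he2 with rfl | he2
          · exact hysP (P.snd_mem_support_of_mem_edges heP)
          rw [List.mem_append] at he2
          rcases he2 with heQ | he1
          · exact edges_disjoint_of_support_disjoint P Q hPQdisj e heP heQ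
          · rw [List.mem_singleton] at he1
            subst he1
            exact hyeP (P.fst_mem_support_of_mem_edges heP)
      have hZtail : Z.support.tail.Nodup := by
        rw [hZsup, Walk.support_eq_cons P, List.cons_append, List.tail_cons]
        apply List.Nodup.append
        · exact ((Walk.isPath_def P).mp hPp).tail
        · apply List.Nodup.append ((Walk.isPath_def Q).mp hQp) (List.nodup_singleton _)
          intro z hz hz2
          rw [List.mem_singleton] at hz2
          subst hz2
          exact hx2Q hz
        · intro z hz1 hz2
          have hzP : z ∈ P.support := List.mem_of_mem_tail hz1
          rw [List.mem_append] at hz2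
          rcases hz2 with hz2 | hz2
          · exact hPQdisj z hzP hz2
          · rw [List.mem_singleton] at hz2
            subst hz2
            have hnd := (Walk.isPath_def P).mp hPp
            rw [Walk.support_eq_cons] at hnd
            exact (List.nodup_cons.mp hnd).1 hz1
      have hZne : Z ≠ Walk.nil := by
        intro h
        rw [h] at hZlen
        simp only [Walk.length_nil] at hZlen
        omega
      have hZcyc : Z.IsCycle :=
        (Walk.isCycle_def Z).mpr ⟨(Walk.isTrail_def Z).mpr hZtrail, hZne, hZtail⟩
      have hfin := hmax Z hZcyc
      omega


lemma main_aux {B : Set V} (hXc : G.IsClique X)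
    (hBX : ∀ z ∈ B, z ∉ X)
    (hB : ∀ ⦃a b : V⦄, G.Adj a b → a ∉ X → b ∉ X → (a ∈ B ↔ b ∈ B))
    {u v : V} (C : G.Walk u u) (D : G.Walk v v)
    (hC : C.IsCycle) (hD : D.IsCycle)
    (hmaxC : ∀ ⦃x : V⦄ (Z : G.Walk x x), Z.IsCycle → Z.length ≤ C.length)
    (hmaxD : ∀ ⦃x : V⦄ (Z : G.Walk x x), Z.IsCycle → Z.length ≤ D.length)
    (hdisj : ∀ w ∈ X, w ∈ C.support → w ∈ D.support → False)
    {a₀ a₁ b₀ b₁ : V}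
    (ha₀C : a₀ ∈ C.support) (ha₀B : a₀ ∈ B)
    (ha₁C : a₁ ∈ C.support) (ha₁B : a₁ ∉ B) (ha₁X : a₁ ∉ X)
    (hb₀D : b₀ ∈ D.support) (hb₀B : b₀ ∈ B)
    (hb₁D : b₁ ∈ D.support) (hb₁B : b₁ ∉ B) (hb₁X : b₁ ∉ X) : False := by
  classical
  set pB : Sym2 V → Bool := fun e => decide (∃ z, z ∈ e ∧ z ∈ B) with hpBdef
  have hpB : ∀ a b : V, pB s(a,b) = true ↔ a ∈ B ∨ b ∈ B := by
    intro a b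
    rw [hpBdef]
    simp only [decide_eq_true_eq]
    constructor
    · rintro ⟨z, hz, hzB⟩
      rcases Sym2.mem_iff.mp hz with rfl | rfl
      · exact Or.inl hzB
      · exact Or.inr hzB
    · rintro (h | h)
      · exact ⟨a, Sym2.mem_mk_left a b, h⟩
      · exact ⟨b, Sym2.mem_mk_right a b, h⟩
  have h1 := key hXc hBX hB hpB C D hC hD hmaxC hdisj ha₀C ha₀B ha₁C ha₁B hb₀D hb₀B hb₁D hb₁B hb₁X
  have h2 := key hXc hBX hB hpB D C hD hC hmaxD
    (fun w hw hwD hwC => hdisj w hw hwC hwD) hb₀D hb₀B hb₁D hb₁B ha₀C ha₀B ha₁C ha₁B ha₁X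
  omega


end LCCAux

/-- Two longest cycles of a 2-connected chordal graph that both cross a clique-cut `X`
share a vertex of `X`. -/
theorem longestCycles_cross_intersect {V : Type*} [Fintype V] (G : SimpleGraph V)
    (h2 : TwoConnected G) (hchord : IsChordal G) (X : Set V) (hX : G.IsClique X)
    (hcut : ∃ a b : V, a ∉ X ∧ b ∉ X ∧ ¬(avoid G X).Reachable a b)
    {u v : V} (C : G.Walk u u) (D : G.Walk v v)
    (hC : IsLongestCycle G C) (hD : IsLongestCycle G D)
    (hCc : CycleCrosses G X C) (hDc : CycleCrosses G X D) :
    ∃ w ∈ X, w ∈ C.support ∧ w ∈ D.support := by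
  classical
  by_contra hno
  have hdisj : ∀ w ∈ X, w ∈ C.support → w ∈ D.support → False := by
    intro w hw h1 h2
    exact hno ⟨w, hw, h1, h2⟩
  obtain ⟨a, haC, a', ha'C, haX, ha'X, hnr⟩ := hCc
  obtain ⟨b, hbD, b', hb'D, hbX, hb'X, hnr'⟩ := hDc
  by_cases hsh : ∃ p q : V, p ∈ C.support ∧ q ∈ D.support ∧ p ∉ X ∧ q ∉ X ∧
      (avoid G X).Reachable p q
  · obtain ⟨p, q, hpC, hqD, hpX, hqX, hpq⟩ := hsh
    set B : Set V := {z | z ∉ X ∧ (avoid G X).Reachable z p} with hBdef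
    have hBX : ∀ z ∈ B, z ∉ X := fun z hz => hz.1
    have hB : ∀ ⦃c d : V⦄, G.Adj c d → c ∉ X → d ∉ X → (c ∈ B ↔ d ∈ B) := by
      intro c d hcd hcX hdX
      have hadj : (avoid G X).Adj c d := show G.Adj c d ∧ c ∉ X ∧ d ∉ X from ⟨hcd, hcX, hdX⟩
      constructor
      · rintro ⟨_, hr⟩
        exact ⟨hdX, (hadj.symm.reachable).trans hr⟩
      · rintro ⟨_, hr⟩
        exact ⟨hcX, hadj.reachable.trans hr⟩
    have ha₀B : p ∈ B := ⟨hpX, SimpleGraph.Reachable.refl p⟩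
    have hb₀B : q ∈ B := ⟨hqX, hpq.symm⟩
    have hA : (a ∈ C.support ∧ a ∉ X ∧ a ∉ B) ∨ (a' ∈ C.support ∧ a' ∉ X ∧ a' ∉ B) := by
      by_cases haB : a ∈ B
      · right
        refine ⟨ha'C, ha'X, ?_⟩
        rintro ⟨_, hr'⟩
        exact hnr (haB.2.trans hr'.symm)
      · left
        exact ⟨haC, haX, haB⟩
    have hBb : (b ∈ D.support ∧ b ∉ X ∧ b ∉ B) ∨ (b' ∈ D.support ∧ b' ∉ X ∧ b' ∉ B) := by
      by_cases hbB : b ∈ B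
      · right
        refine ⟨hb'D, hb'X, ?_⟩
        rintro ⟨_, hr'⟩
        exact hnr' (hbB.2.trans hr'.symm)
      · left
        exact ⟨hbD, hbX, hbB⟩
    rcases hA with ⟨h1, h2, h3⟩ | ⟨h1, h2, h3⟩ <;>
      rcases hBb with ⟨g1, g2, g3⟩ | ⟨g1, g2, g3⟩ <;>
      exact LCCAux.main_aux hX hBX hB C D hC.1 hD.1 hC.2 hD.2 hdisj
        hpC ha₀B h1 h3 h2 hqD hb₀B g1 g3 g2
  · set B : Set V :=
      {z | z ∉ X ∧ ((avoid G X).Reachable z a ∨ (avoid G X).Reachable z b)} with hBdef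
    have hBX : ∀ z ∈ B, z ∉ X := fun z hz => hz.1
    have hB : ∀ ⦃c d : V⦄, G.Adj c d → c ∉ X → d ∉ X → (c ∈ B ↔ d ∈ B) := by
      intro c d hcd hcX hdX
      have hadj : (avoid G X).Adj c d := show G.Adj c d ∧ c ∉ X ∧ d ∉ X from ⟨hcd, hcX, hdX⟩
      constructor
      · rintro ⟨_, hr | hr⟩
        · exact ⟨hdX, Or.inl ((hadj.symm.reachable).trans hr)⟩
        · exact ⟨hdX, Or.inr ((hadj.symm.reachable).trans hr)⟩
      · rintro ⟨_, hr | hr⟩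
        · exact ⟨hcX, Or.inl (hadj.reachable.trans hr)⟩
        · exact ⟨hcX, Or.inr (hadj.reachable.trans hr)⟩
    have ha₀B : a ∈ B := ⟨haX, Or.inl (SimpleGraph.Reachable.refl a)⟩
    have hb₀B : b ∈ B := ⟨hbX, Or.inr (SimpleGraph.Reachable.refl b)⟩
    have ha₁B : a' ∉ B := by
      rintro ⟨_, hr | hr⟩
      · exact hnr hr.symm
      · exact hsh ⟨a', b, ha'C, hbD, ha'X, hbX, hr⟩
    have hb₁B : b' ∉ B := by
      rintro ⟨_, hr | hr⟩
      · exact hsh ⟨a, b', haC, hb'D, haX, hb'X, hr.symm⟩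
      · exact hnr' hr.symm
    exact LCCAux.main_aux hX hBX hB C D hC.1 hD.1 hC.2 hD.2 hdisj
      haC ha₀B ha'C ha₁B ha'X hbD hb₀B hb'D hb₁B hb'X
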